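/- Suppose M : ℕ → (0,∞) satisfies lim_{N→∞} N(ln ln N)²/(M(N)·ln N) = 0. For θ ∈ (0,π] define η_θ = ((√(3−cos θ) + √(1−cos θ))/√2)² and F_N(θ) = −2(1 − η_θ^{−4M(N)})·(1 + cos θ)·(3 − cos θ)^{−1/2}·(1 − cos θ)^{−1/2} / [ 1 + η_θ^{−4M(N)} + (1 − η_θ^{−4M(N)})·√2·(1 − cos θ)^{1/2}·(3 − cos θ)^{−1/2} ]. Then lim_{N→∞} (1/√(4M(N)·N·ln N)) · [ ∑_{n=1}^{N} F_N(θ_n) + (4/π)·N·ln N ] = 0, where θ_n = π(2n−1)/(2N). -/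

import Mathlib

open Filter Finset

/-- `η_θ = ((√(3−cos θ) + √(1−cos θ))/√2)²`; equals `e^{γ_θ(β_c)}`. -/
noncomputable def eta (θ : ℝ) : ℝ :=
  ((Real.sqrt (3 - Real.cos θ) + Real.sqrt (1 - Real.cos θ)) / Real.sqrt 2) ^ 2

/-- `F_N(θ)`, the derivative at `β = β_c` of
`f_θ(β) = ln[1 + e^{−4Mγ_θ(β)} + (1 − e^{−4Mγ_θ(β)})g_θ(β)] − ln 2`; here `m = M(N)`. -/
noncomputable def FN (m θ : ℝ) : ℝ :=
  -2 * (1 - eta θ ^ (-(4 * m))) * (1 + Real.cos θ) *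
      (Real.sqrt (3 - Real.cos θ))⁻¹ * (Real.sqrt (1 - Real.cos θ))⁻¹ /
    (1 + eta θ ^ (-(4 * m)) +
      (1 - eta θ ^ (-(4 * m))) * Real.sqrt 2 * Real.sqrt (1 - Real.cos θ) *
        (Real.sqrt (3 - Real.cos θ))⁻¹)

noncomputable def Gf (θ : ℝ) : ℝ :=
  -2 * (1 + Real.cos θ) *
      (Real.sqrt (3 - Real.cos θ))⁻¹ * (Real.sqrt (1 - Real.cos θ))⁻¹ /
    (1 + Real.sqrt 2 * Real.sqrt (1 - Real.cos θ) * (Real.sqrt (3 - Real.cos θ))⁻¹)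

lemma cos_lt_one' {θ : ℝ} (h0 : 0 < θ) (h1 : θ < 2 * Real.pi) : Real.cos θ < 1 := by
  refine lt_of_le_of_ne (Real.cos_le_one θ) (fun h => ?_)
  have := (Real.cos_eq_one_iff_of_lt_of_lt (by nlinarith [Real.pi_pos]) h1).1 h
  linarith

lemma one_sub_cos {θ : ℝ} : 1 - Real.cos θ = 2 * Real.sin (θ / 2) ^ 2 := by
  have h : Real.cos θ = Real.cos (2 * (θ / 2)) := by rw [show 2 * (θ/2) = θ by ring]
  rw [h, Real.cos_two_mul']
  nlinarith [Real.sin_sq_add_cos_sq (θ / 2)]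

lemma sqrt_one_sub_cos {θ : ℝ} (h0 : 0 < θ) (h1 : θ ≤ Real.pi) :
    2 * θ / Real.pi ≤ Real.sqrt 2 * Real.sqrt (1 - Real.cos θ) := by
  have hs : 0 ≤ Real.sin (θ / 2) := Real.sin_nonneg_of_nonneg_of_le_pi (by linarith) (by linarith [Real.pi_pos])
  have h2 : Real.sqrt (1 - Real.cos θ) = Real.sqrt 2 * Real.sin (θ / 2) := by
    rw [one_sub_cos, Real.sqrt_mul (by norm_num), Real.sqrt_sq hs]
  rw [h2, ← mul_assoc, Real.mul_self_sqrt (by norm_num)]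
  have h3 := Real.mul_le_sin (x := θ / 2) (by linarith) (by linarith)
  calc 2 * θ / Real.pi = 2 * (2 / Real.pi * (θ / 2)) := by ring
  _ ≤ 2 * Real.sin (θ / 2) := by linarith

lemma eta_eq {θ : ℝ} (hc : Real.cos θ ≤ 1) :
    eta θ = 2 - Real.cos θ + Real.sqrt (3 - Real.cos θ) * Real.sqrt (1 - Real.cos θ) := by
  unfold eta
  rw [div_pow, Real.sq_sqrt (by norm_num : (0:ℝ) ≤ 2), add_sq,
    Real.sq_sqrt (by linarith : (0:ℝ) ≤ 3 - Real.cos θ),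
    Real.sq_sqrt (by linarith : (0:ℝ) ≤ 1 - Real.cos θ)]
  ring

lemma eta_lower {θ : ℝ} (h0 : 0 < θ) (h1 : θ ≤ Real.pi) :
    1 + 2 * θ / Real.pi ≤ eta θ := by
  have hc : Real.cos θ ≤ 1 := Real.cos_le_one θ
  rw [eta_eq hc]
  have hb : (0:ℝ) ≤ Real.sqrt (1 - Real.cos θ) := Real.sqrt_nonneg _
  have ha : Real.sqrt 2 ≤ Real.sqrt (3 - Real.cos θ) := by
    apply Real.sqrt_le_sqrt; linarith
  have h2 := sqrt_one_sub_cos h0 h1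
  nlinarith [mul_le_mul_of_nonneg_right ha hb]

lemma eta_one_le {θ : ℝ} (h0 : 0 < θ) (h1 : θ ≤ Real.pi) : 1 ≤ eta θ := by
  have := eta_lower h0 h1
  have hπ := Real.pi_pos
  have : 0 < 2 * θ / Real.pi := by positivity
  linarith [eta_lower h0 h1]

lemma frac_identity (a b q x c : ℝ) (ha : a ≠ 0) (hb : b ≠ 0)
    (hDne : 1 + x + (1 - x) * q * b * a⁻¹ ≠ 0) (hEne : 1 + q * b * a⁻¹ ≠ 0) :
    -2 * (1 - x) * (1 + c) * a⁻¹ * b⁻¹ / (1 + x + (1 - x) * q * b * a⁻¹)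
      - -2 * (1 + c) * a⁻¹ * b⁻¹ / (1 + q * b * a⁻¹)
    = 4 * (1 + c) * x / (a * b * ((1 + x + (1 - x) * q * b * a⁻¹) * (1 + q * b * a⁻¹))) := by
  rw [div_sub_div _ _ hDne hEne, div_eq_div_iff (mul_ne_zero hDne hEne)
    (by exact mul_ne_zero (mul_ne_zero ha hb) (mul_ne_zero hDne hEne))]
  field_simp
  ring

lemma FN_sub_Gf {θ m : ℝ} (h0 : 0 < θ) (h1 : θ < Real.pi) (hm : 0 < m) :
    0 ≤ FN m θ - Gf θ ∧
      FN m θ - Gf θ ≤ 4 * Real.pi / θ * eta θ ^ (-(4 * m)) := by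
  have hπ := Real.pi_pos
  have hc1 : Real.cos θ < 1 := cos_lt_one' h0 (by linarith)
  have hc2 : -1 ≤ Real.cos θ := Real.neg_one_le_cos θ
  have h1c : 0 < 1 - Real.cos θ := by linarith
  have h3c : 0 < 3 - Real.cos θ := by linarith
  have ha : 0 < Real.sqrt (3 - Real.cos θ) := Real.sqrt_pos.2 h3c
  have hb : 0 < Real.sqrt (1 - Real.cos θ) := Real.sqrt_pos.2 h1c
  have haq : Real.sqrt 2 ≤ Real.sqrt (3 - Real.cos θ) := Real.sqrt_le_sqrt (by linarith)
  have hq : (0:ℝ) < Real.sqrt 2 := by positivity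
  have hx0 : 0 < eta θ ^ (-(4 * m)) :=
    Real.rpow_pos_of_pos (by linarith [eta_one_le h0 h1.le]) _
  have hx1 : eta θ ^ (-(4 * m)) ≤ 1 :=
    Real.rpow_le_one_of_one_le_of_nonpos (eta_one_le h0 h1.le) (by linarith)
  have hsb : 2 * θ / Real.pi ≤ Real.sqrt 2 * Real.sqrt (1 - Real.cos θ) :=
    sqrt_one_sub_cos h0 h1.le
  set x := eta θ ^ (-(4 * m)) with hxdef
  set a := Real.sqrt (3 - Real.cos θ) with hadef
  set b := Real.sqrt (1 - Real.cos θ) with hbdef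
  have hs0 : 0 ≤ Real.sqrt 2 * b * a⁻¹ := by positivity
  have hD : 1 ≤ 1 + x + (1 - x) * Real.sqrt 2 * b * a⁻¹ := by nlinarith
  have hE : 1 ≤ 1 + Real.sqrt 2 * b * a⁻¹ := by linarith
  have key : FN m θ - Gf θ =
      4 * (1 + Real.cos θ) * x /
        (a * b * ((1 + x + (1 - x) * Real.sqrt 2 * b * a⁻¹) *
          (1 + Real.sqrt 2 * b * a⁻¹))) := by
    unfold FN Gf
    rw [← hxdef, ← hadef, ← hbdef]
    exact frac_identity a b (Real.sqrt 2) x (Real.cos θ) ha.ne' hb.ne'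
      (by linarith) (by linarith)
  have hDE : 1 ≤ (1 + x + (1 - x) * Real.sqrt 2 * b * a⁻¹) * (1 + Real.sqrt 2 * b * a⁻¹) := by
    nlinarith
  have hab : 2 * θ / Real.pi ≤ a * b := by
    calc 2 * θ / Real.pi ≤ Real.sqrt 2 * b := hsb
    _ ≤ a * b := mul_le_mul_of_nonneg_right haq hb.le
  have hden1 : 2 * θ / Real.pi ≤ a * b *
      ((1 + x + (1 - x) * Real.sqrt 2 * b * a⁻¹) * (1 + Real.sqrt 2 * b * a⁻¹)) := by
    calc 2 * θ / Real.pi ≤ a * b := hab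
    _ ≤ _ := le_mul_of_one_le_right (mul_pos ha hb).le hDE
  have hθπ : 0 < 2 * θ / Real.pi := by positivity
  have hdenpos : 0 < a * b *
      ((1 + x + (1 - x) * Real.sqrt 2 * b * a⁻¹) * (1 + Real.sqrt 2 * b * a⁻¹)) :=
    lt_of_lt_of_le hθπ hden1
  constructor
  · rw [key]
    apply div_nonneg _ hdenpos.le
    nlinarith
  · rw [key]
    have h8 : 4 * (1 + Real.cos θ) * x ≤ 8 * x := by nlinarith
    have step : 4 * (1 + Real.cos θ) * x /
        (a * b * ((1 + x + (1 - x) * Real.sqrt 2 * b * a⁻¹) * (1 + Real.sqrt 2 * b * a⁻¹)))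
        ≤ 8 * x / (2 * θ / Real.pi) :=
      div_le_div₀ (by positivity) h8 hθπ hden1
    have heq : 8 * x / (2 * θ / Real.pi) = 4 * Real.pi / θ * x := by
      field_simp
      ring
    linarith [step, heq ▸ step]

lemma frac2 (a b q C : ℝ) (ha : a ≠ 0) (hb : b ≠ 0)
    (hD : 1 + q * b * a⁻¹ ≠ 0) (hD2 : a * b + q * b ^ 2 ≠ 0) :
    -2 * C * a⁻¹ * b⁻¹ / (1 + q * b * a⁻¹) = -(2 * C) / (a * b + q * b ^ 2) := by
  rw [div_eq_div_iff hD hD2]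
  field_simp

lemma Gf_eq {θ : ℝ} (h0 : 0 < θ) (h1 : θ < Real.pi) :
    Gf θ = -(2 * (1 - Real.sin (θ/2) ^ 2)) /
      (Real.sin (θ/2) * (Real.sqrt (1 + Real.sin (θ/2) ^ 2) + Real.sqrt 2 * Real.sin (θ/2))) := by
  have hπ := Real.pi_pos
  set u := Real.sin (θ/2) with hu
  set w := Real.sqrt (1 + u ^ 2) with hwdef
  have hu0 : 0 < u := Real.sin_pos_of_pos_of_lt_pi (by linarith) (by linarith)
  have hw0 : 0 < w := Real.sqrt_pos.2 (by positivity)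
  have hq : (0:ℝ) < Real.sqrt 2 := by positivity
  have h2 : Real.sqrt 2 * Real.sqrt 2 = 2 := Real.mul_self_sqrt (by norm_num)
  have hc1 : Real.cos θ < 1 := cos_lt_one' h0 (by linarith)
  have hc2 : -1 ≤ Real.cos θ := Real.neg_one_le_cos θ
  have h1c : 0 < 1 - Real.cos θ := by linarith
  have h3c : 0 < 3 - Real.cos θ := by linarith
  have ha : 0 < Real.sqrt (3 - Real.cos θ) := Real.sqrt_pos.2 h3c
  have hb : 0 < Real.sqrt (1 - Real.cos θ) := Real.sqrt_pos.2 h1c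
  have hcc : Real.cos θ = 1 - 2 * u ^ 2 := by
    have := one_sub_cos (θ := θ); linarith
  have habs : Real.sqrt (3 - Real.cos θ) = Real.sqrt 2 * w := by
    rw [show 3 - Real.cos θ = 2 * (1 + u ^ 2) by rw [hcc]; ring, Real.sqrt_mul (by norm_num)]
  have hbbs : Real.sqrt (1 - Real.cos θ) = Real.sqrt 2 * u := by
    rw [one_sub_cos, Real.sqrt_mul (by norm_num), Real.sqrt_sq hu0.le]
  have hDpos : 0 < 1 + Real.sqrt 2 * Real.sqrt (1 - Real.cos θ) * (Real.sqrt (3 - Real.cos θ))⁻¹ := by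
    have : 0 < Real.sqrt 2 * Real.sqrt (1 - Real.cos θ) * (Real.sqrt (3 - Real.cos θ))⁻¹ :=
      mul_pos (mul_pos hq hb) (inv_pos.2 ha)
    linarith
  have hD2pos : 0 < Real.sqrt (3 - Real.cos θ) * Real.sqrt (1 - Real.cos θ)
      + Real.sqrt 2 * Real.sqrt (1 - Real.cos θ) ^ 2 := by positivity
  have e1 : Gf θ = -(2 * (1 + Real.cos θ)) /
      (Real.sqrt (3 - Real.cos θ) * Real.sqrt (1 - Real.cos θ)
        + Real.sqrt 2 * Real.sqrt (1 - Real.cos θ) ^ 2) := by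
    unfold Gf
    exact frac2 _ _ _ _ ha.ne' hb.ne' hDpos.ne' hD2pos.ne'
  rw [e1, habs, hbbs, hcc]
  rw [show Real.sqrt 2 * w * (Real.sqrt 2 * u) + Real.sqrt 2 * (Real.sqrt 2 * u) ^ 2
      = (Real.sqrt 2 * Real.sqrt 2) * (u * w) + (Real.sqrt 2 * Real.sqrt 2) * (Real.sqrt 2 * u ^ 2)
      by ring, h2]
  rw [div_eq_div_iff (by positivity) (by positivity)]
  ring

set_option maxHeartbeats 1000000 in
lemma Gf_bound {θ : ℝ} (h0 : 0 < θ) (h1 : θ < Real.pi) : |Gf θ + 4 / θ| ≤ 6 := by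
  have hπ := Real.pi_pos
  have hπ4 : Real.pi < 3.15 := Real.pi_lt_d2
  set t := θ / 2 with htdef
  set u := Real.sin t with hu
  set w := Real.sqrt (1 + u ^ 2) with hwdef
  have ht0 : 0 < t := by positivity
  have ht2 : t < Real.pi / 2 := by rw [htdef]; linarith
  have hu0 : 0 < u := Real.sin_pos_of_pos_of_lt_pi ht0 (by linarith)
  have hu1 : u ≤ 1 := Real.sin_le_one t
  have hut : u < t := Real.sin_lt ht0
  have hu2 : 2 / Real.pi * t ≤ u := Real.mul_le_sin ht0.le ht2.le
  have hw0 : 0 < w := Real.sqrt_pos.2 (by positivity)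
  have hwsq : w ^ 2 = 1 + u ^ 2 := Real.sq_sqrt (by positivity)
  have hw1 : 1 ≤ w := by nlinarith
  have hw2 : w ≤ 1 + u ^ 2 / 2 := by nlinarith
  have hq : (0:ℝ) < Real.sqrt 2 := by positivity
  have hq2 : Real.sqrt 2 < 1.5 := by
    nlinarith [Real.sq_sqrt (by norm_num : (0:ℝ) ≤ 2), Real.sqrt_nonneg 2]
  have hGf : Gf θ = -(2 * (1 - u ^ 2)) / (u * (w + Real.sqrt 2 * u)) := Gf_eq h0 h1
  have hθt : 4 / θ = 2 / t := by rw [htdef]; field_simp; norm_num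
  have hden : 0 < u * (w + Real.sqrt 2 * u) := by positivity
  clear_value t u w
  have hupi : 2 * t ≤ u * Real.pi := by
    have h5 := mul_le_mul_of_nonneg_right hu2 hπ.le
    calc 2 * t = 2 / Real.pi * t * Real.pi := by field_simp
    _ ≤ u * Real.pi := h5
  have hA1 : 2 / t - 2 / u ≤ 0 := by
    have : 2 / t ≤ 2 / u := by
      apply div_le_div_of_nonneg_left (by norm_num) hu0 hut.le
    linarith
  have hA2 : -3 ≤ 2 / t - 2 / u := by
    have key : 2 / u - 2 / t ≤ 3 := by
      rw [div_sub_div _ _ hu0.ne' ht0.ne', div_le_iff₀ (mul_pos hu0 ht0)]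
      rcases le_or_gt t 1 with hc | hc
      · have hcube := Real.sin_gt_sub_cube ht0
        nlinarith [sq_nonneg t, mul_pos ht0 hu0, sq_nonneg (t - u)]
      · nlinarith [mul_pos ht0 hu0]
    linarith
  have hBeq : 2 / u - 2 * (1 - u ^ 2) / (u * (w + Real.sqrt 2 * u))
      = (2 * (w + Real.sqrt 2 * u) - 2 * (1 - u ^ 2)) / (u * (w + Real.sqrt 2 * u)) := by
    field_simp
  have hB1 : 0 ≤ 2 / u - 2 * (1 - u ^ 2) / (u * (w + Real.sqrt 2 * u)) := by
    rw [hBeq]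
    apply div_nonneg _ hden.le
    linarith [mul_pos hq hu0, sq_nonneg u]
  have hB2 : 2 / u - 2 * (1 - u ^ 2) / (u * (w + Real.sqrt 2 * u)) ≤ 6 := by
    rw [hBeq, div_le_iff₀ hden]
    have hnum : 2 * (w + Real.sqrt 2 * u) - 2 * (1 - u ^ 2) ≤ 3 * u ^ 2 + 2 * Real.sqrt 2 * u := by
      linarith [hw2]
    have h6 : 3 * u ^ 2 + 2 * Real.sqrt 2 * u ≤ 6 * u := by
      nlinarith [hu0, hu1, hq2]
    have h7 : 6 * u ≤ 6 * (u * (w + Real.sqrt 2 * u)) := by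
      have : 1 ≤ w + Real.sqrt 2 * u := by linarith [mul_pos hq hu0]
      nlinarith [hu0]
    linarith
  have hsum : Gf θ + 4 / θ = (2 / t - 2 / u) +
      (2 / u - 2 * (1 - u ^ 2) / (u * (w + Real.sqrt 2 * u))) := by
    rw [hGf, hθt]
    ring
  rw [hsum, abs_le]
  constructor <;> linarith

lemma HH_le (N : ℕ) : ∑ n ∈ Icc 1 N, ((n:ℝ))⁻¹ ≤ 1 + Real.log N := by
  have h1 : ((harmonic N : ℚ) : ℝ) = ∑ n ∈ Icc 1 N, ((n:ℝ))⁻¹ := by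
    rw [harmonic_eq_sum_Icc]; push_cast; ring
  rw [← h1]; exact harmonic_le_one_add_log N

lemma HH_ge (N : ℕ) : Real.log (N + 1) ≤ ∑ n ∈ Icc 1 N, ((n:ℝ))⁻¹ := by
  have h1 : ((harmonic N : ℚ) : ℝ) = ∑ n ∈ Icc 1 N, ((n:ℝ))⁻¹ := by
    rw [harmonic_eq_sum_Icc]; push_cast; ring
  rw [← h1]
  have := log_add_one_le_harmonic N
  rwa [show ((N:ℝ) + 1) = ((N + 1 : ℕ) : ℝ) by push_cast; ring]

lemma ON_eq (N : ℕ) : ∑ n ∈ Icc 1 N, (2 * (n:ℝ) - 1)⁻¹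
    = (∑ n ∈ Icc 1 (2 * N), ((n:ℝ))⁻¹) - (∑ n ∈ Icc 1 N, ((n:ℝ))⁻¹) / 2 := by
  induction N with
  | zero => simp
  | succ n ih =>
    rw [Finset.sum_Icc_succ_top (by omega : 1 ≤ n + 1),
      show 2 * (n + 1) = (2 * n + 1) + 1 by ring,
      Finset.sum_Icc_succ_top (by omega : 1 ≤ (2 * n + 1) + 1),
      Finset.sum_Icc_succ_top (by omega : 1 ≤ 2 * n + 1),
      Finset.sum_Icc_succ_top (by omega : 1 ≤ n + 1), ih]
    have h1 : (((2 * n + 1 : ℕ) : ℝ))⁻¹ = (2 * ((n:ℝ) + 1) - 1)⁻¹ := by push_cast; congr 1; ring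
    have h2 : ((((2 * n + 1) + 1 : ℕ) : ℝ))⁻¹ = (((n : ℕ) : ℝ) + 1)⁻¹ / 2 := by
      push_cast
      rw [eq_div_iff (by norm_num)]
      rw [show (2 * (n:ℝ) + 1 + 1) = 2 * ((n:ℝ) + 1) by ring, mul_inv]
      field_simp
    push_cast [h1, h2] at *
    linarith

lemma ON_bound {N : ℕ} (hN : 1 ≤ N) :
    |∑ n ∈ Icc 1 N, (2 * (n:ℝ) - 1)⁻¹ - Real.log N / 2| ≤ 2 := by
  have hN0 : (0:ℝ) < N := by exact_mod_cast Nat.pos_of_ne_zero (by omega)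
  have e := ON_eq N
  have hu1 := HH_le (2 * N)
  have hu2 := HH_ge (2 * N)
  have hl1 := HH_le N
  have hl2 := HH_ge N
  have hcast : (((2 * N : ℕ)) : ℝ) = 2 * (N : ℝ) := by push_cast; ring
  rw [hcast] at hu1 hu2
  have hlog2N : Real.log (2 * (N:ℝ)) = Real.log 2 + Real.log N :=
    Real.log_mul (by norm_num) hN0.ne'
  have hmono1 : Real.log N ≤ Real.log ((N:ℝ) + 1) :=
    Real.log_le_log hN0 (by linarith)
  have hmono2 : Real.log (2 * (N:ℝ)) ≤ Real.log (2 * (N:ℝ) + 1) :=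
    Real.log_le_log (by linarith) (by linarith)
  have hlog2a : Real.log 2 ≤ 1 := by
    have := Real.log_le_sub_one_of_pos (by norm_num : (0:ℝ) < 2); linarith
  have hlog2b : 0 ≤ Real.log 2 := Real.log_nonneg one_le_two
  rw [abs_le]
  constructor <;> [skip; skip] <;> linarith

lemma step_ineq {A : ℝ} (hA : 1 ≤ A) : ((A + 1)⁻¹) ^ 3 ≤ ((A⁻¹) ^ 2 - ((A + 1)⁻¹) ^ 2) / 2 := by
  have h0 : 0 < A := by linarith
  have h1 : 0 < A + 1 := by linarith
  have key : ((A⁻¹) ^ 2 - ((A + 1)⁻¹) ^ 2) / 2 - ((A + 1)⁻¹) ^ 3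
      = ((2 * A + 1) * (A + 1) - 2 * A ^ 2) / (2 * A ^ 2 * (A + 1) ^ 3) := by
    field_simp
    ring
  have hnum : 0 ≤ (2 * A + 1) * (A + 1) - 2 * A ^ 2 := by nlinarith
  have := div_nonneg hnum (by positivity : (0:ℝ) ≤ 2 * A ^ 2 * (A + 1) ^ 3)
  linarith [key ▸ this]

lemma cube_tail_aux (K : ℕ) (hK : 1 ≤ K) (N : ℕ) (hKN : K ≤ N) :
    ∑ n ∈ Icc (K + 1) N, (((n:ℝ))⁻¹) ^ 3 ≤ (((K:ℝ))⁻¹ ^ 2 - ((N:ℝ))⁻¹ ^ 2) / 2 := by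
  induction N, hKN using Nat.le_induction with
  | base =>
    rw [Finset.Icc_eq_empty (by omega)]
    simp
  | succ n hn ih =>
    rw [Finset.sum_Icc_succ_top (by omega : K + 1 ≤ n + 1)]
    have hA : (1:ℝ) ≤ (n:ℝ) := by exact_mod_cast le_trans hK hn
    have hs := step_ineq hA
    have hc : (((n+1 : ℕ)):ℝ) = (n:ℝ) + 1 := by push_cast; ring
    rw [hc]
    linarith

lemma cube_tail (K : ℕ) (hK : 1 ≤ K) (N : ℕ) :
    ∑ n ∈ Icc (K + 1) N, (((n:ℝ))⁻¹) ^ 3 ≤ ((K:ℝ))⁻¹ ^ 2 / 2 := by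
  rcases le_or_gt K N with h | h
  · have := cube_tail_aux K hK N h
    have : (((K:ℝ))⁻¹ ^ 2 - ((N:ℝ))⁻¹ ^ 2) / 2 ≤ ((K:ℝ))⁻¹ ^ 2 / 2 := by
      have : (0:ℝ) ≤ ((N:ℝ))⁻¹ ^ 2 := by positivity
      linarith
    linarith [cube_tail_aux K hK N h]
  · rw [Finset.Icc_eq_empty (by omega)]
    positivity

lemma rpow_bound {t m : ℝ} (ht : 0 < t) (hm : 1 ≤ m) :
    (1 + t) ^ (-(4 * m)) ≤ ((2 * m * t)⁻¹) ^ 2 := by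
  have h1 : (1:ℝ) ≤ 1 + t := by linarith
  have hmt : 0 < 2 * m * t := by nlinarith
  have hB : 1 + 2 * m * t ≤ (1 + t) ^ (2 * m) := by
    have := one_add_mul_self_le_rpow_one_add (by linarith : (-1:ℝ) ≤ t)
      (by linarith : (1:ℝ) ≤ 2 * m)
    linarith [this]
  have hsq : (1 + t) ^ (4 * m) = ((1 + t) ^ (2 * m)) ^ 2 := by
    rw [← Real.rpow_natCast ((1 + t) ^ (2 * m)) 2, ← Real.rpow_mul (by linarith)]
    norm_num
    ring_nf
  have h2 : (2 * m * t) ^ 2 ≤ (1 + t) ^ (4 * m) := by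
    rw [hsq]
    nlinarith [hmt]
  rw [Real.rpow_neg (by linarith)]
  calc ((1 + t) ^ (4 * m))⁻¹ ≤ ((2 * m * t) ^ 2)⁻¹ :=
        inv_anti₀ (by positivity) h2
  _ = ((2 * m * t)⁻¹) ^ 2 := by rw [inv_pow]

lemma Icc_one_eq_Ioc (X : ℕ) : Icc 1 X = Ioc 0 X := Finset.Icc_add_one_left_eq_Ioc 0 X

lemma xsum (N K : ℕ) (m : ℝ) (hN : 1 ≤ N) (hm : 1 ≤ m) (hK1 : 1 ≤ K) (hKN : K ≤ N)
    (hKm : (N:ℝ) ≤ m * K) :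
    ∑ n ∈ Icc 1 N, (1 + (2 * (n:ℝ) - 1) / N) ^ (-(4 * m)) * (2 * (n:ℝ) - 1)⁻¹
      ≤ 1 + Real.log K + 8⁻¹ := by
  have hN0 : (0:ℝ) < N := by exact_mod_cast Nat.pos_of_ne_zero (by omega)
  have hK0 : (0:ℝ) < K := by exact_mod_cast Nat.pos_of_ne_zero (by omega)
  have hm0 : (0:ℝ) < m := by linarith
  have hsplit : ∑ n ∈ Icc 1 N, (1 + (2 * (n:ℝ) - 1) / N) ^ (-(4 * m)) * (2 * (n:ℝ) - 1)⁻¹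
      = (∑ n ∈ Icc 1 K, (1 + (2 * (n:ℝ) - 1) / N) ^ (-(4 * m)) * (2 * (n:ℝ) - 1)⁻¹)
        + ∑ n ∈ Icc (K+1) N, (1 + (2 * (n:ℝ) - 1) / N) ^ (-(4 * m)) * (2 * (n:ℝ) - 1)⁻¹ := by
    rw [Icc_one_eq_Ioc, Icc_one_eq_Ioc, Finset.Icc_add_one_left_eq_Ioc,
      Finset.sum_Ioc_consecutive _ (Nat.zero_le K) hKN]
  rw [hsplit]
  have part1 : ∑ n ∈ Icc 1 K, (1 + (2 * (n:ℝ) - 1) / N) ^ (-(4 * m)) * (2 * (n:ℝ) - 1)⁻¹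
      ≤ 1 + Real.log K := by
    calc ∑ n ∈ Icc 1 K, (1 + (2 * (n:ℝ) - 1) / N) ^ (-(4 * m)) * (2 * (n:ℝ) - 1)⁻¹
        ≤ ∑ n ∈ Icc 1 K, ((n:ℝ))⁻¹ := by
          apply Finset.sum_le_sum
          intro n hn
          have hn1 : 1 ≤ n := (Finset.mem_Icc.1 hn).1
          have hn1' : (1:ℝ) ≤ (n:ℝ) := by exact_mod_cast hn1
          have hk0 : (0:ℝ) < 2 * (n:ℝ) - 1 := by linarith
          have hx1 : (1 + (2 * (n:ℝ) - 1) / N) ^ (-(4 * m)) ≤ 1 :=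
            Real.rpow_le_one_of_one_le_of_nonpos
              (by have : 0 ≤ (2 * (n:ℝ) - 1) / N := by positivity
                  linarith)
              (by linarith)
          calc (1 + (2 * (n:ℝ) - 1) / N) ^ (-(4 * m)) * (2 * (n:ℝ) - 1)⁻¹
              ≤ 1 * (2 * (n:ℝ) - 1)⁻¹ :=
                mul_le_mul_of_nonneg_right hx1 (by positivity)
          _ = (2 * (n:ℝ) - 1)⁻¹ := one_mul _
          _ ≤ ((n:ℝ))⁻¹ := by
                apply inv_anti₀ (by linarith) (by linarith)
    _ ≤ 1 + Real.log K := HH_le K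
  have part2 : ∑ n ∈ Icc (K+1) N, (1 + (2 * (n:ℝ) - 1) / N) ^ (-(4 * m)) * (2 * (n:ℝ) - 1)⁻¹
      ≤ 8⁻¹ := by
    have hterm : ∀ n ∈ Icc (K+1) N,
        (1 + (2 * (n:ℝ) - 1) / N) ^ (-(4 * m)) * (2 * (n:ℝ) - 1)⁻¹
          ≤ (N:ℝ)^2 / (4 * m^2) * (((n:ℝ))⁻¹)^3 := by
      intro n hn
      have hn1 : K + 1 ≤ n := (Finset.mem_Icc.1 hn).1
      have hn1' : (1:ℝ) ≤ (n:ℝ) := by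
        have : 1 ≤ n := by omega
        exact_mod_cast this
      have hk0 : (0:ℝ) < 2 * (n:ℝ) - 1 := by linarith
      have ht : 0 < (2 * (n:ℝ) - 1) / N := by positivity
      have hrb := rpow_bound ht hm
      calc (1 + (2 * (n:ℝ) - 1) / N) ^ (-(4 * m)) * (2 * (n:ℝ) - 1)⁻¹
          ≤ ((2 * m * ((2 * (n:ℝ) - 1) / N))⁻¹)^2 * (2 * (n:ℝ) - 1)⁻¹ :=
            mul_le_mul_of_nonneg_right hrb (by positivity)
      _ = (N:ℝ)^2 / (4 * m^2) * ((2 * (n:ℝ) - 1)⁻¹)^3 := by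
            field_simp
            ring
      _ ≤ (N:ℝ)^2 / (4 * m^2) * (((n:ℝ))⁻¹)^3 := by
            apply mul_le_mul_of_nonneg_left _ (by positivity)
            apply pow_le_pow_left₀ (by positivity)
            apply inv_anti₀ (by linarith) (by linarith)
    calc ∑ n ∈ Icc (K+1) N, (1 + (2 * (n:ℝ) - 1) / N) ^ (-(4 * m)) * (2 * (n:ℝ) - 1)⁻¹
        ≤ ∑ n ∈ Icc (K+1) N, (N:ℝ)^2 / (4 * m^2) * (((n:ℝ))⁻¹)^3 :=
          Finset.sum_le_sum hterm
    _ = (N:ℝ)^2 / (4 * m^2) * ∑ n ∈ Icc (K+1) N, (((n:ℝ))⁻¹)^3 := by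
          rw [Finset.mul_sum]
    _ ≤ (N:ℝ)^2 / (4 * m^2) * (((K:ℝ))⁻¹^2 / 2) := by
          apply mul_le_mul_of_nonneg_left (cube_tail K hK1 N) (by positivity)
    _ ≤ 8⁻¹ := by
          rw [show (N:ℝ)^2 / (4 * m^2) * (((K:ℝ))⁻¹^2 / 2) = (N:ℝ)^2 / (8 * m^2 * (K:ℝ)^2) by
            field_simp; ring]
          rw [div_le_iff₀ (by positivity)]
          nlinarith
  linarith

set_option maxHeartbeats 1000000 in
lemma main_bound (N K : ℕ) (m : ℝ) (hN : 1 ≤ N) (hm : 1 ≤ m) (hK1 : 1 ≤ K)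
    (hKN : K ≤ N) (hKm : (N:ℝ) ≤ m * K) :
    |(∑ n ∈ Icc 1 N, FN m (Real.pi * (2 * (n:ℝ) - 1) / (2 * N)))
      + 4 / Real.pi * N * Real.log N| ≤ 8 * N * (2 + Real.log K) + 13 * N := by
  have hπ := Real.pi_pos
  have hπ3 : 3 < Real.pi := Real.pi_gt_three
  have hN0 : (0:ℝ) < N := by exact_mod_cast Nat.pos_of_ne_zero (by omega)
  have hm0 : 0 < m := by linarith
  have hlogK : 0 ≤ Real.log K := Real.log_nonneg (by exact_mod_cast hK1)
  have hθ : ∀ n ∈ Icc 1 N, 0 < Real.pi * (2 * (n:ℝ) - 1) / (2 * N) ∧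
      Real.pi * (2 * (n:ℝ) - 1) / (2 * N) < Real.pi := by
    intro n hn
    obtain ⟨ha1, ha2⟩ := Finset.mem_Icc.1 hn
    have hn1 : (1:ℝ) ≤ (n:ℝ) := by exact_mod_cast ha1
    have hnN : (n:ℝ) ≤ (N:ℝ) := by exact_mod_cast ha2
    constructor
    · apply div_pos (mul_pos hπ (by linarith)) (by linarith)
    · rw [div_lt_iff₀ (by linarith)]
      nlinarith
  -- S1 bounds
  have hS1a : 0 ≤ ∑ n ∈ Icc 1 N,
      (FN m (Real.pi * (2 * (n:ℝ) - 1) / (2 * N)) - Gf (Real.pi * (2 * (n:ℝ) - 1) / (2 * N))) :=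
    Finset.sum_nonneg fun n hn => (FN_sub_Gf (hθ n hn).1 (hθ n hn).2 hm0).1
  have hS1b : ∑ n ∈ Icc 1 N,
      (FN m (Real.pi * (2 * (n:ℝ) - 1) / (2 * N)) - Gf (Real.pi * (2 * (n:ℝ) - 1) / (2 * N)))
      ≤ 8 * N * (1 + Real.log K + 8⁻¹) := by
    calc ∑ n ∈ Icc 1 N,
        (FN m (Real.pi * (2 * (n:ℝ) - 1) / (2 * N)) - Gf (Real.pi * (2 * (n:ℝ) - 1) / (2 * N)))
        ≤ ∑ n ∈ Icc 1 N,
          8 * N * ((1 + (2 * (n:ℝ) - 1) / N) ^ (-(4 * m)) * (2 * (n:ℝ) - 1)⁻¹) := by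
          apply Finset.sum_le_sum
          intro n hn
          obtain ⟨h0n, h1n⟩ := hθ n hn
          obtain ⟨ha1, ha2⟩ := Finset.mem_Icc.1 hn
          have hn1 : (1:ℝ) ≤ (n:ℝ) := by exact_mod_cast ha1
          have hk0 : (0:ℝ) < 2 * (n:ℝ) - 1 := by linarith
          have hFG := (FN_sub_Gf h0n h1n hm0).2
          have e2 : 2 * (Real.pi * (2 * (n:ℝ) - 1) / (2 * N)) / Real.pi
              = (2 * (n:ℝ) - 1) / N := by
            field_simp
          have e3 : eta (Real.pi * (2 * (n:ℝ) - 1) / (2 * N)) ^ (-(4 * m))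
              ≤ (1 + (2 * (n:ℝ) - 1) / N) ^ (-(4 * m)) := by
            apply Real.rpow_le_rpow_of_nonpos
            · have : 0 < (2 * (n:ℝ) - 1) / N := by positivity
              linarith
            · have := eta_lower h0n h1n.le
              rw [e2] at this
              exact this
            · linarith
          have e1 : 4 * Real.pi / (Real.pi * (2 * (n:ℝ) - 1) / (2 * N))
              = 8 * N * (2 * (n:ℝ) - 1)⁻¹ := by
            field_simp
            ring
          calc FN m (Real.pi * (2 * (n:ℝ) - 1) / (2 * N))
                - Gf (Real.pi * (2 * (n:ℝ) - 1) / (2 * N))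
              ≤ 4 * Real.pi / (Real.pi * (2 * (n:ℝ) - 1) / (2 * N)) *
                  eta (Real.pi * (2 * (n:ℝ) - 1) / (2 * N)) ^ (-(4 * m)) := hFG
          _ ≤ 4 * Real.pi / (Real.pi * (2 * (n:ℝ) - 1) / (2 * N)) *
                  (1 + (2 * (n:ℝ) - 1) / N) ^ (-(4 * m)) :=
                mul_le_mul_of_nonneg_left e3 (le_of_lt (div_pos (by linarith) h0n))
          _ = 8 * N * ((1 + (2 * (n:ℝ) - 1) / N) ^ (-(4 * m)) * (2 * (n:ℝ) - 1)⁻¹) := by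
                rw [e1]
                ring
    _ = 8 * N * ∑ n ∈ Icc 1 N,
          ((1 + (2 * (n:ℝ) - 1) / N) ^ (-(4 * m)) * (2 * (n:ℝ) - 1)⁻¹) := by
          rw [Finset.mul_sum]
    _ ≤ 8 * N * (1 + Real.log K + 8⁻¹) := by
          apply mul_le_mul_of_nonneg_left (xsum N K m hN hm hK1 hKN hKm) (by positivity)
  -- S2 bound
  have hcard : (Icc 1 N).card = N := by rw [Nat.card_Icc]; omega
  have hS2 : |∑ n ∈ Icc 1 N, (Gf (Real.pi * (2 * (n:ℝ) - 1) / (2 * N))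
      + 4 / (Real.pi * (2 * (n:ℝ) - 1) / (2 * N)))| ≤ 6 * N := by
    calc |∑ n ∈ Icc 1 N, (Gf (Real.pi * (2 * (n:ℝ) - 1) / (2 * N))
        + 4 / (Real.pi * (2 * (n:ℝ) - 1) / (2 * N)))|
        ≤ ∑ n ∈ Icc 1 N, |Gf (Real.pi * (2 * (n:ℝ) - 1) / (2 * N))
          + 4 / (Real.pi * (2 * (n:ℝ) - 1) / (2 * N))| := Finset.abs_sum_le_sum_abs _ _
    _ ≤ ∑ _n ∈ Icc 1 N, (6:ℝ) :=
          Finset.sum_le_sum fun n hn => Gf_bound (hθ n hn).1 (hθ n hn).2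
    _ = 6 * N := by rw [Finset.sum_const, hcard, nsmul_eq_mul]; ring
  -- S3 bound
  have hS3eq : ∑ n ∈ Icc 1 N, 4 / (Real.pi * (2 * (n:ℝ) - 1) / (2 * N))
      = 8 * N / Real.pi * ∑ n ∈ Icc 1 N, (2 * (n:ℝ) - 1)⁻¹ := by
    rw [Finset.mul_sum]
    apply Finset.sum_congr rfl
    intro n hn
    have hn1 : (1:ℝ) ≤ (n:ℝ) := by exact_mod_cast (Finset.mem_Icc.1 hn).1
    have hk0 : (0:ℝ) < 2 * (n:ℝ) - 1 := by linarith
    field_simp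
    ring
  have hON := ON_bound hN
  have hS3 : |(∑ n ∈ Icc 1 N, 4 / (Real.pi * (2 * (n:ℝ) - 1) / (2 * N)))
      - 4 / Real.pi * N * Real.log N| ≤ 6 * N := by
    have heq : (∑ n ∈ Icc 1 N, 4 / (Real.pi * (2 * (n:ℝ) - 1) / (2 * N)))
        - 4 / Real.pi * N * Real.log N
        = (8 * N / Real.pi) * ((∑ n ∈ Icc 1 N, (2 * (n:ℝ) - 1)⁻¹) - Real.log N / 2) := by
      rw [hS3eq]
      ring
    rw [heq, abs_mul, abs_of_nonneg (by positivity : (0:ℝ) ≤ 8 * N / Real.pi)]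
    calc 8 * N / Real.pi * |(∑ n ∈ Icc 1 N, (2 * (n:ℝ) - 1)⁻¹) - Real.log N / 2|
        ≤ 8 * N / Real.pi * 2 := mul_le_mul_of_nonneg_left hON (by positivity)
    _ ≤ 6 * N := by
          rw [div_mul_eq_mul_div, div_le_iff₀ hπ]
          nlinarith
  -- decompose
  have hdec : (∑ n ∈ Icc 1 N, FN m (Real.pi * (2 * (n:ℝ) - 1) / (2 * N)))
      = (∑ n ∈ Icc 1 N, (FN m (Real.pi * (2 * (n:ℝ) - 1) / (2 * N))
          - Gf (Real.pi * (2 * (n:ℝ) - 1) / (2 * N))))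
        + (∑ n ∈ Icc 1 N, (Gf (Real.pi * (2 * (n:ℝ) - 1) / (2 * N))
          + 4 / (Real.pi * (2 * (n:ℝ) - 1) / (2 * N))))
        - ∑ n ∈ Icc 1 N, 4 / (Real.pi * (2 * (n:ℝ) - 1) / (2 * N)) := by
    rw [← Finset.sum_add_distrib, ← Finset.sum_sub_distrib]
    apply Finset.sum_congr rfl
    intros
    ring
  rw [abs_le] at hS2 hS3 ⊢
  constructor
  · rw [hdec]
    nlinarith [hS1a, hS2.1, hS3.2, mul_nonneg hN0.le hlogK]
  · rw [hdec]
    nlinarith [hS1b, hS2.2, hS3.1, mul_nonneg hN0.le hlogK]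

set_option maxHeartbeats 1000000 in
/-- Suppose `M : ℕ → (0,∞)` satisfies `N(ln ln N)²/(M(N)·ln N) → 0`. Then
`(1/√(4M(N)N ln N))·[∑_{n=1}^{N} F_N(θ_n) + (4/π)N ln N] → 0` as `N → ∞`, where
`θ_n = π(2n−1)/(2N)`. -/
theorem stmt17 (M : ℕ → ℝ) (hMpos : ∀ N, 0 < M N)
    (hM : Tendsto (fun N : ℕ =>
        (N : ℝ) * (Real.log (Real.log N)) ^ 2 / (M N * Real.log N)) atTop (nhds 0)) :
    Tendsto (fun N : ℕ =>
        (1 / Real.sqrt (4 * M N * N * Real.log N)) *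
          ((∑ n ∈ Finset.Icc 1 N, FN (M N) (Real.pi * (2 * (n : ℝ) - 1) / (2 * N)))
            + (4 / Real.pi) * N * Real.log N))
      atTop (nhds 0) := by
  set h : ℕ → ℝ := fun N : ℕ =>
    (N : ℝ) * (Real.log (Real.log N)) ^ 2 / (M N * Real.log N) with hh
  have hg : Tendsto (fun N : ℕ => (45 / 2) * Real.sqrt (h N)) atTop (nhds 0) := by
    have h1 : Tendsto (fun N : ℕ => Real.sqrt (h N)) atTop (nhds 0) := by
      have := (Real.continuous_sqrt.tendsto' 0 0 Real.sqrt_zero).comp hM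
      exact this
    have := h1.const_mul (45 / 2 : ℝ)
    simpa using this
  apply squeeze_zero_norm' _ hg
  have hev1 : ∀ᶠ N : ℕ in atTop, h N < 1 := by
    have : Set.Iio (1:ℝ) ∈ nhds (0:ℝ) := Iio_mem_nhds one_pos
    exact hM this
  filter_upwards [hev1, eventually_ge_atTop 21] with N h1 h21
  -- basic numerics
  have hπ := Real.pi_pos
  have hN1 : 1 ≤ N := by omega
  have hN0 : (0:ℝ) < N := by exact_mod_cast Nat.pos_of_ne_zero (by omega)
  have hN21 : (21:ℝ) ≤ N := by exact_mod_cast h21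
  have hm0 : 0 < M N := hMpos N
  have hexp1 : Real.exp 1 < 2.7182818286 := Real.exp_one_lt_d9
  have hexp3 : Real.exp 1 ^ 3 < 21 := by
    have h2 : Real.exp 1 ^ 3 ≤ (2.7182818286:ℝ) ^ 3 :=
      pow_le_pow_left₀ (Real.exp_pos 1).le hexp1.le 3
    nlinarith
  have hexpe : Real.exp (Real.exp 1) ≤ 21 := by
    have h3 : Real.exp (Real.exp 1) ≤ Real.exp 3 :=
      Real.exp_le_exp.2 (by nlinarith [Real.exp_pos 1])
    have : Real.exp 3 = Real.exp 1 ^ 3 := by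
      rw [show (3:ℝ) = 1 + 1 + 1 by norm_num, Real.exp_add, Real.exp_add]
      ring
    linarith
  have hlogN : Real.exp 1 ≤ Real.log N := by
    rw [Real.le_log_iff_exp_le hN0]
    calc Real.exp (Real.exp 1) ≤ 21 := hexpe
    _ ≤ (N:ℝ) := hN21
  have hlogN1 : 1 ≤ Real.log N := by
    have : (1:ℝ) ≤ Real.exp 1 := by linarith [Real.exp_pos 1, Real.add_one_le_exp 1]
    linarith
  have hlogN0 : 0 < Real.log N := by linarith
  have hLL1 : 1 ≤ Real.log (Real.log N) := by
    rw [Real.le_log_iff_exp_le hlogN0]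
    simpa using hlogN
  set LL := Real.log (Real.log N) with hLL
  -- rearrange h N < 1
  have hmain1 : (N:ℝ) * LL ^ 2 < M N * Real.log N := by
    have hden : 0 < M N * Real.log N := mul_pos hm0 hlogN0
    have := (div_lt_one hden).1 h1
    linarith
  have hLL2 : 1 ≤ LL ^ 2 := by nlinarith
  have hNLL : (N:ℝ) ≤ (N:ℝ) * LL ^ 2 := by nlinarith
  have hNm : (N:ℝ) / M N < Real.log N := by
    rw [div_lt_iff₀ hm0]
    linarith
  have hm1 : 1 ≤ M N := by
    have hlogle : Real.log N ≤ (N:ℝ) := by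
      have := Real.log_le_sub_one_of_pos hN0
      linarith
    by_contra hcon
    push_neg at hcon
    have c1 : M N * Real.log N ≤ M N * (N:ℝ) :=
      mul_le_mul_of_nonneg_left hlogle hm0.le
    have c2 : M N * (N:ℝ) < 1 * (N:ℝ) := by
      apply mul_lt_mul_of_pos_right hcon hN0
    linarith
  -- K
  set K := ⌈(N:ℝ) / M N⌉₊ with hKdef
  have hdivpos : 0 < (N:ℝ) / M N := div_pos hN0 hm0
  have hK1 : 1 ≤ K := Nat.one_le_iff_ne_zero.2 (by
    have := Nat.ceil_pos.2 hdivpos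
    omega)
  have hKlt : (K:ℝ) < (N:ℝ) / M N + 1 := Nat.ceil_lt_add_one hdivpos.le
  have hKlogN : (K:ℝ) < Real.log N + 1 := by linarith
  have hKN : K ≤ N := by
    have hlogle : Real.log N ≤ (N:ℝ) - 1 := by
      have := Real.log_le_sub_one_of_pos hN0
      linarith
    have : (K:ℝ) < (N:ℝ) := by linarith
    exact_mod_cast this.le
  have hKm : (N:ℝ) ≤ M N * K := by
    have := Nat.le_ceil ((N:ℝ) / M N)
    rw [div_le_iff₀ hm0] at this
    linarith [this]
  have hK0 : (0:ℝ) < K := by exact_mod_cast Nat.pos_of_ne_zero (by omega)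
  have hlogK : Real.log K ≤ 1 + LL := by
    have hstep : Real.log K ≤ Real.log (2 * Real.log N) := by
      apply Real.log_le_log hK0
      linarith
    have hsplit : Real.log (2 * Real.log N) = Real.log 2 + LL :=
      Real.log_mul (by norm_num) hlogN0.ne'
    have hlog2 : Real.log 2 ≤ 1 := by
      have := Real.log_le_sub_one_of_pos (by norm_num : (0:ℝ) < 2)
      linarith
    linarith
  -- main bound
  have hmb := main_bound N K (M N) hN1 hm1 hK1 hKN hKm
  have habs : |(∑ n ∈ Finset.Icc 1 N, FN (M N) (Real.pi * (2 * (n : ℝ) - 1) / (2 * N)))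
      + 4 / Real.pi * N * Real.log N| ≤ 45 * N * LL := by
    have t1 : 8 * (N:ℝ) * (2 + Real.log K) ≤ 8 * N * (3 + LL) := by
      apply mul_le_mul_of_nonneg_left (by linarith) (by positivity)
    have t2 : 37 * (N:ℝ) ≤ 37 * N * LL := by nlinarith
    calc |(∑ n ∈ Finset.Icc 1 N, FN (M N) (Real.pi * (2 * (n : ℝ) - 1) / (2 * N)))
        + 4 / Real.pi * N * Real.log N| ≤ 8 * N * (2 + Real.log K) + 13 * N := hmb
    _ ≤ 45 * N * LL := by nlinarith
  -- norm computation
  have hX : (0:ℝ) < 4 * M N * N * Real.log N := by positivity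
  have hsX : 0 < Real.sqrt (4 * M N * N * Real.log N) := Real.sqrt_pos.2 hX
  have hhnn : 0 ≤ h N := by positivity
  have hid : Real.sqrt (h N) = 2 * N * LL / Real.sqrt (4 * M N * N * Real.log N) := by
    rw [eq_div_iff hsX.ne', ← Real.sqrt_mul hhnn]
    rw [show h N * (4 * M N * N * Real.log N) = (2 * N * LL)^2 by
      rw [hh]
      field_simp
      ring]
    exact Real.sqrt_sq (by positivity)
  rw [Real.norm_eq_abs, abs_mul, abs_of_nonneg (by positivity :
    (0:ℝ) ≤ 1 / Real.sqrt (4 * M N * N * Real.log N))]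
  calc 1 / Real.sqrt (4 * M N * N * Real.log N) *
      |(∑ n ∈ Finset.Icc 1 N, FN (M N) (Real.pi * (2 * (n : ℝ) - 1) / (2 * N)))
        + 4 / Real.pi * N * Real.log N|
      ≤ 1 / Real.sqrt (4 * M N * N * Real.log N) * (45 * N * LL) :=
        mul_le_mul_of_nonneg_left habs (by positivity)
  _ = 45 / 2 * Real.sqrt (h N) := by
        rw [hid]
        field_simp
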